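/- arXiv:1011.0276 — 3 statements merged into one kernel-verified Lean document; each statement's English description precedes it below -/
import Mathlib

section
/- For an n×n complex matrix C and indices j < i ≤ n, the alternating sum ∑_{k=j}^{i} (-1)^{k-j} Δ^{i,i+1,…,n}_{k,i+1,…,n}(C) · Δ^{j+1,…,n}_{j,…,k̂,…,n}(C) equals zero, where Δ^{rows}_{cols}(C) denotes the minor determinant of C taken on the indicated rows and columns, and k̂ means the index k is omitted from the column list j,…,n. -/
open Matrix Finset

/-- The minor determinant `Δ^{rows}_{cols}(C)`. -/
def minorDet {R : Type*} [CommRing R] {n r : ℕ} (C : Matrix (Fin n) (Fin n) R)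
    (rows cols : Fin r → Fin n) : R :=
  (C.submatrix rows cols).det

/-- The index list `(i, i+1, …, n-1)` (0-based), as a map `Fin (n - i) → Fin n`. -/
def idxFrom {n : ℕ} (i : ℕ) : Fin (n - i) → Fin n :=
  fun l => ⟨i + l.1, by have := l.2; omega⟩

/-- The index list `(k, i+1, …, n-1)` (0-based). -/
def idxRepl {n : ℕ} (i : ℕ) (k : Fin n) : Fin (n - i) → Fin n :=
  fun l => if l.1 = 0 then k else ⟨i + l.1, by have := l.2; omega⟩

/-- The index list `(j, …, n-1)` with `k` omitted (0-based). -/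
def idxOmit {n : ℕ} (j k : ℕ) : Fin (n - (j + 1)) → Fin n :=
  fun l => if j + l.1 < k then ⟨j + l.1, by have := l.2; omega⟩
    else ⟨j + l.1 + 1, by have := l.2; omega⟩

lemma succAbove_val {m : ℕ} (p : Fin (m + 1)) (b : Fin m) :
    (p.succAbove b : ℕ) = if b.1 < p.1 then b.1 else b.1 + 1 := by
  rw [Fin.succAbove]
  by_cases h : (b.castSucc : Fin (m+1)) < p
  · rw [if_pos h, if_pos (by simpa [Fin.lt_def] using h)]
    rfl
  · rw [if_neg h, if_neg (by simpa [Fin.lt_def] using h)]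
    rfl

lemma idxFrom_eq {n : ℕ} (i : ℕ) (l : Fin (n - i)) : idxFrom i l = ⟨i + l.1, by have := l.2; omega⟩ :=
  rfl

lemma idxRepl_zero {n : ℕ} (i : ℕ) (K : Fin n) (l : Fin (n - i)) (hl : l.1 = 0) :
    idxRepl i K l = K := by
  simp only [idxRepl, if_pos hl]

lemma idxRepl_pos {n : ℕ} (i : ℕ) (K : Fin n) (l : Fin (n - i)) (hl : l.1 ≠ 0) :
    idxRepl i K l = ⟨i + l.1, by have := l.2; omega⟩ := by
  simp only [idxRepl, if_neg hl]

/-- If `i < k`, the minor `Δ^{i..}_{k,i+1..}` has a repeated column, so it vanishes. -/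
lemma A_vanish {n : ℕ} (C : Matrix (Fin n) (Fin n) ℂ) (i k : ℕ) (hik : i < k) (hkn : k < n) :
    minorDet C (idxFrom i) (idxRepl i ⟨k, hkn⟩) = 0 := by
  apply Matrix.det_zero_of_column_eq
    (i := (⟨0, by omega⟩ : Fin (n - i))) (j := ⟨k - i, by omega⟩)
  · intro h
    have := congrArg Fin.val h
    simp only at this
    omega
  · intro p
    simp only [Matrix.submatrix_apply]
    congr 1
    rw [idxRepl_zero i _ _ rfl, idxRepl_pos i _ _ (by simp; omega)]
    exact Fin.ext (by simp; omega)

/-- Laplace expansion of the minor `Δ^{i..}_{K,i+1..}` along its first column. -/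
lemma A_expand {n : ℕ} (C : Matrix (Fin n) (Fin n) ℂ) (i r : ℕ) (hr : n - i = r + 1)
    (K : Fin n) :
    minorDet C (idxFrom i) (idxRepl i K) =
      ∑ p : Fin (r + 1), (-1 : ℂ) ^ p.1 * C ⟨i + p.1, by omega⟩ K *
        (Matrix.of (fun a b : Fin r =>
          C ⟨i + (p.succAbove a).1, by have := (p.succAbove a).2; omega⟩
            ⟨i + b.1 + 1, by have := b.2; omega⟩)).det := by
  rw [minorDet, ← Matrix.det_submatrix_equiv_self (finCongr hr.symm),
    Matrix.submatrix_submatrix]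
  rw [Matrix.det_succ_column_zero]
  refine Finset.sum_congr rfl fun p _ => ?_
  have h1 : (C.submatrix (idxFrom i ∘ (finCongr hr.symm)) (idxRepl i K ∘ (finCongr hr.symm))) p 0
      = C ⟨i + p.1, by omega⟩ K := by
    simp only [Matrix.submatrix_apply, Function.comp]
    congr 1
  have h2 : (C.submatrix (idxFrom i ∘ (finCongr hr.symm))
        (idxRepl i K ∘ (finCongr hr.symm))).submatrix p.succAbove Fin.succ =
      Matrix.of (fun a b : Fin r =>
        C ⟨i + (p.succAbove a).1, by have := (p.succAbove a).2; omega⟩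
          ⟨i + b.1 + 1, by have := b.2; omega⟩) := by
    funext a b
    simp only [Matrix.submatrix_apply, Function.comp, Matrix.of_apply]
    congr 1
  rw [h1, h2]

/-- Rows for the auxiliary matrix with a repeated row. -/
def frows {n : ℕ} (j : ℕ) (m : Fin n) : Fin (n - (j + 1) + 1) → Fin n :=
  Fin.cases m (idxFrom (j + 1))

/-- The inner alternating sum is the Laplace expansion (along row 0) of a matrix
with a repeated row, hence vanishes. -/
lemma inner_vanish {n : ℕ} (C : Matrix (Fin n) (Fin n) ℂ) (j t m : ℕ)
    (ht : n - (j + 1) = t) (hjm : j + 1 ≤ m) (hmn : m < n) :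
    ∑ k : Fin (t + 1), (-1 : ℂ) ^ k.1 * C ⟨m, hmn⟩ ⟨j + k.1, by omega⟩ *
      minorDet C (idxFrom (j + 1)) (idxOmit j (j + k.1)) = 0 := by
  subst ht
  have hdet0 : (Matrix.of (fun p q : Fin (n - (j + 1) + 1) =>
      C (frows j ⟨m, hmn⟩ p) ⟨j + q.1, by have := q.2; omega⟩)).det = 0 := by
    apply Matrix.det_zero_of_row_eq (i := 0) (j := ⟨m - j, by omega⟩)
    · intro h
      have := congrArg Fin.val h
      simp only [Fin.val_zero] at this
      omega
    · funext q
      simp only [Matrix.of_apply]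
      congr 1
      have hsucc : (⟨m - j, by omega⟩ : Fin (n - (j + 1) + 1)) =
          Fin.succ ⟨m - (j + 1), by omega⟩ := Fin.ext (by simp; omega)
      rw [hsucc]
      simp only [frows, Fin.cases_zero, Fin.cases_succ]
      rw [idxFrom_eq]
      exact Fin.ext (by simp; omega)
  rw [Matrix.det_succ_row_zero] at hdet0
  rw [← hdet0]
  refine Finset.sum_congr rfl fun k _ => ?_
  congr 1
  · congr 1
    funext b
    simp only [idxOmit]
    rcases lt_or_ge (b : ℕ) (k : ℕ) with h | h
    · rw [if_pos (by omega)]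
      refine Fin.ext ?_
      simp only [succAbove_val]
      rw [if_pos (by omega)]
    · rw [if_neg (by omega)]
      refine Fin.ext ?_
      simp only [succAbove_val]
      rw [if_neg (by omega)]
      omega

/-- 0-based indices: for `j < i < n`,
`∑_{k=j}^{i} (-1)^{k-j} Δ^{i,…,n-1}_{k,i+1,…,n-1}(C) · Δ^{j+1,…,n-1}_{j,…,k̂,…,n-1}(C) = 0`. -/
theorem stmt_0 (n : ℕ) (C : Matrix (Fin n) (Fin n) ℂ) (i j : ℕ)
    (hji : j < i) (hin : i < n) :
    ∑ k ∈ (Finset.Icc j i).attach,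
      (-1 : ℂ) ^ ((k : ℕ) - j) *
        minorDet C (idxFrom i)
          (idxRepl i ⟨(k : ℕ), by have := Finset.mem_Icc.mp k.2; omega⟩) *
        minorDet C (idxFrom (j + 1)) (idxOmit j (k : ℕ)) = 0 := by
  set g : ℕ → ℂ := fun k =>
    if hk : k < n then
      (-1 : ℂ) ^ (k - j) * minorDet C (idxFrom i) (idxRepl i ⟨k, hk⟩) *
        minorDet C (idxFrom (j + 1)) (idxOmit j k)
    else 0 with hg
  have step1 : ∑ k ∈ (Finset.Icc j i).attach,
      (-1 : ℂ) ^ ((k : ℕ) - j) *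
        minorDet C (idxFrom i)
          (idxRepl i ⟨(k : ℕ), by have := Finset.mem_Icc.mp k.2; omega⟩) *
        minorDet C (idxFrom (j + 1)) (idxOmit j (k : ℕ)) = ∑ k ∈ Finset.Icc j i, g k := by
    rw [← Finset.sum_attach (Finset.Icc j i) g]
    refine Finset.sum_congr rfl fun k _ => ?_
    have hk : (k : ℕ) < n := by have := Finset.mem_Icc.mp k.2; omega
    rw [hg]
    simp only [dif_pos hk]
  rw [step1]
  have step2 : ∑ k ∈ Finset.Icc j i, g k = ∑ k ∈ Finset.Icc j (n - 1), g k := by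
    apply Finset.sum_subset
    · intro x hx
      simp only [Finset.mem_Icc] at hx ⊢
      omega
    · intro x hx hx'
      simp only [Finset.mem_Icc] at hx hx'
      have hxn : x < n := by omega
      have hxi : i < x := by omega
      rw [hg]
      simp only [dif_pos hxn]
      rw [A_vanish C i x hxi hxn]
      ring
  rw [step2]
  obtain ⟨t, ht⟩ : ∃ t, n - (j + 1) = t := ⟨n - (j + 1), rfl⟩
  have hnj : n - j = t + 1 := by omega
  have hIccIco : Finset.Icc j (n - 1) = Finset.Ico j n := by
    rw [← Finset.Ico_add_one_right_eq_Icc]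
    congr 1
    omega
  have step3 : ∑ k ∈ Finset.Icc j (n - 1), g k = ∑ k : Fin (t + 1), g (j + k.1) := by
    rw [hIccIco, Finset.sum_Ico_eq_sum_range, hnj, ← Fin.sum_univ_eq_sum_range]
  rw [step3]
  obtain ⟨r, hr⟩ : ∃ r, n - i = r + 1 := ⟨n - i - 1, by omega⟩
  have key : ∀ k : Fin (t + 1), g (j + k.1) =
      ∑ p : Fin (r + 1),
        ((-1 : ℂ) ^ p.1 *
          (Matrix.of (fun a b : Fin r =>
            C ⟨i + (p.succAbove a).1, by have := (p.succAbove a).2; omega⟩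
              ⟨i + b.1 + 1, by have := b.2; omega⟩)).det) *
        ((-1 : ℂ) ^ k.1 * C ⟨i + p.1, by omega⟩ ⟨j + k.1, by have := k.2; omega⟩ *
          minorDet C (idxFrom (j + 1)) (idxOmit j (j + k.1))) := by
    intro k
    have hk : j + k.1 < n := by have := k.2; omega
    rw [hg]
    simp only [dif_pos hk]
    rw [A_expand C i r hr ⟨j + k.1, hk⟩]
    rw [Finset.mul_sum, Finset.sum_mul]
    refine Finset.sum_congr rfl fun p _ => ?_
    have hkj : j + k.1 - j = k.1 := by omega
    rw [hkj]
    ring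
  rw [Finset.sum_congr rfl (fun k _ => key k), Finset.sum_comm]
  apply Finset.sum_eq_zero
  intro p _
  rw [← Finset.mul_sum]
  rw [inner_vanish C j t (i + p.1) ht (by omega) (by omega)]
  ring
end

section
/- Let P be the n×n lower-triangular matrix with entries f_{i,k} = (−1)^{n−i} t^{−1} · [Δ^{1,i+1,…,n}_{i,i+1,…,n}(C_1) · Δ^{i,i+1,…,n}_{k,i+1,…,n}(C_t)] / [Δ^{i+1,…,n}_{i+1,…,n}(C_t) · Δ^{i,…,n}_{i,…,n}(C_t)] for k ≤ i, and let Q be the n×n lower-triangular matrix with entries g_{k,i} = (−1)^{n−k} t · Δ^{i+1,…,n}_{i,…,k̂,…,n}(C_t) / Δ^{1,i+1,…,n}_{i,i+1,…,n}(C_1) for i ≤ k. Then P Q = I_n, provided all the minor determinants appearing in denominators are nonzero. -/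
open Matrix Finset

/-- `Δ^{1,i+1,…,n}_{i,i+1,…,n}(C)` (0-based: rows `(0, i+1, …, n-1)`, columns
`(i, …, n-1)`). -/
def minA {R : Type*} [CommRing R] {n : ℕ} (C : Matrix (Fin n) (Fin n) R)
    (i : Fin n) : R :=
  minorDet C (idxRepl i.1 ⟨0, by have := i.isLt; omega⟩) (idxFrom i.1)

/-- `Δ^{i,i+1,…,n}_{k,i+1,…,n}(C)`. -/
def minB {R : Type*} [CommRing R] {n : ℕ} (C : Matrix (Fin n) (Fin n) R)
    (i k : Fin n) : R :=
  minorDet C (idxFrom i.1) (idxRepl i.1 k)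

/-- `Δ^{i+1,…,n}_{i+1,…,n}(C)`. -/
def minC {R : Type*} [CommRing R] {n : ℕ} (C : Matrix (Fin n) (Fin n) R)
    (i : Fin n) : R :=
  minorDet C (idxFrom (i.1 + 1)) (idxFrom (i.1 + 1))

/-- `Δ^{i,…,n}_{i,…,n}(C)`. -/
def minD {R : Type*} [CommRing R] {n : ℕ} (C : Matrix (Fin n) (Fin n) R)
    (i : Fin n) : R :=
  minorDet C (idxFrom i.1) (idxFrom i.1)

/-- `Δ^{i+1,…,n}_{i,…,k̂,…,n}(C)`. -/
def minOmit {R : Type*} [CommRing R] {n : ℕ} (C : Matrix (Fin n) (Fin n) R)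
    (i k : Fin n) : R :=
  minorDet C (idxFrom (i.1 + 1)) (idxOmit i.1 k.1)

variable {n : ℕ} (Ct : Matrix (Fin n) (Fin n) ℂ)

lemma minB_self (i : Fin n) : minB Ct i i = minD Ct i := by
  have h : idxRepl i.1 i = idxFrom (n := n) i.1 := by
    funext l
    unfold idxRepl idxFrom
    split_ifs with h
    · exact Fin.ext (by simp [h])
    · rfl
  rw [minB, minD, h]

lemma minOmit_self (i : Fin n) : minOmit Ct i i = minC Ct i := by
  have h : idxOmit i.1 i.1 = idxFrom (n := n) (i.1 + 1) := by
    funext l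
    unfold idxOmit idxFrom
    rw [if_neg (by omega)]
    apply Fin.ext
    show i.1 + l.1 + 1 = i.1 + 1 + l.1
    omega
  rw [minOmit, minC, h]

lemma minB_eq_zero (i k : Fin n) (h : i.1 < k.1) : minB Ct i k = 0 := by
  have hk := k.2
  unfold minB minorDet
  apply Matrix.det_zero_of_column_eq
    (i := (⟨0, by omega⟩ : Fin (n - i.1))) (j := ⟨k.1 - i.1, by omega⟩)
  · intro hc
    have := congrArg Fin.val hc
    simp only [Fin.val_mk] at this
    omega
  · intro r
    simp only [Matrix.submatrix_apply]
    congr 1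
    unfold idxRepl
    rw [if_pos rfl, if_neg (by simp only [Fin.val_mk]; omega)]
    exact Fin.ext (by simp only [Fin.val_mk]; omega)

lemma minB_expand (i : Fin n) : ∃ N : ℕ → ℂ, ∀ k : Fin n,
    minB Ct i k = ∑ r : Fin (n - i.1),
      (-1 : ℂ) ^ r.1 * Ct (idxFrom i.1 r) k * N r.1 := by
  have hi := i.2
  have hm : n - i.1 = (n - (i.1 + 1)) + 1 := by omega
  set m := n - (i.1 + 1) with hmdef
  refine ⟨fun r => if hr : r < m + 1 then
    det (Ct.submatrix
      (fun a : Fin m => (⟨i.1 + ((⟨r, hr⟩ : Fin (m+1)).succAbove a).1, by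
        have := ((⟨r, hr⟩ : Fin (m+1)).succAbove a).2; omega⟩ : Fin n))
      (idxFrom (i.1 + 1))) else 0, fun k => ?_⟩
  rw [minB, minorDet,
    ← Matrix.det_submatrix_equiv_self (finCongr hm.symm), Matrix.submatrix_submatrix,
    Matrix.det_succ_column_zero]
  apply Eq.symm
  apply Fintype.sum_equiv (finCongr hm)
  intro x
  simp only []
  rw [dif_pos (show x.1 < m + 1 by omega)]
  have h0 : (idxRepl i.1 k ∘ (finCongr hm.symm)) 0 = k := by
    simp [idxRepl, finCongr]
  rw [Matrix.submatrix_apply, h0]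
  congr 1
  congr 1
  ext a b
  simp only [Matrix.submatrix_apply, Function.comp_apply]
  congr 1
  unfold idxRepl idxFrom
  rw [if_neg (show ¬((finCongr hm.symm (Fin.succ b)).1 = 0) by simp [Fin.succ])]
  apply Fin.ext
  show i.1 + 1 + b.1 = i.1 + (finCongr hm.symm (Fin.succ b)).1
  show i.1 + 1 + b.1 = i.1 + (b.1 + 1)
  omega

lemma omit_expansion (j r : Fin n) (hr : j.1 < r.1) :
    ∑ c : Fin (n - j.1),
      (-1 : ℂ) ^ c.1 * Ct r (idxFrom j.1 c) * minOmit Ct j (idxFrom j.1 c) = 0 := by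
  have hrn := r.2
  have hp : n - j.1 = (n - (j.1 + 1)) + 1 := by omega
  set p := n - (j.1 + 1) with hpdef
  set G : Matrix (Fin (p+1)) (Fin (p+1)) ℂ :=
    Ct.submatrix (fun l => idxRepl j.1 r (Fin.cast hp.symm l))
                 (fun l => idxFrom j.1 (Fin.cast hp.symm l)) with hGdef
  have hG : det G = 0 := by
    apply Matrix.det_zero_of_row_eq (i := 0) (j := ⟨r.1 - j.1, by omega⟩)
    · intro hc
      have := congrArg Fin.val hc
      simp only [Fin.val_mk, Fin.val_zero] at this
      omega
    · funext c
      show Ct _ _ = Ct _ _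
      congr 1
      unfold idxRepl
      beta_reduce
      have e1 : (Fin.cast hp.symm (0 : Fin (p+1))).1 = 0 := rfl
      rw [if_pos e1, if_neg (show ¬((Fin.cast hp.symm
        (⟨r.1 - j.1, by omega⟩ : Fin (p+1))).1 = 0) by
          intro hcon
          have : r.1 - j.1 = 0 := hcon
          omega)]
      apply Fin.ext
      show r.1 = j.1 + (Fin.cast hp.symm (⟨r.1 - j.1, by omega⟩ : Fin (p+1))).1
      show r.1 = j.1 + (r.1 - j.1)
      omega
  rw [Matrix.det_succ_row_zero] at hG
  rw [← hG]
  apply Fintype.sum_equiv (finCongr hp)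
  intro c
  congr 1
  show minOmit Ct j (idxFrom j.1 c) = _
  unfold minOmit minorDet
  congr 1
  ext a b
  simp only [hGdef, Matrix.submatrix_apply]
  congr 1
  · unfold idxRepl
    rw [if_neg (show ¬((Fin.cast hp.symm (Fin.succ a)).1 = 0) by simp [Fin.succ])]
    apply Fin.ext
    show j.1 + 1 + a.1 = j.1 + (Fin.cast hp.symm (Fin.succ a)).1
    show j.1 + 1 + a.1 = j.1 + (a.1 + 1)
    omega
  · unfold idxFrom idxOmit
    unfold Fin.succAbove
    have hc : ((finCongr hp) c).1 = c.1 := rfl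
    have hb : ((Fin.castSucc b)).1 = b.1 := rfl
    have hbs : ((Fin.succ b)).1 = b.1 + 1 := rfl
    have hk : (idxFrom j.1 c : Fin n).1 = j.1 + c.1 := rfl
    split_ifs with h1 h2 h2
    · apply Fin.ext
      show j.1 + b.1 = j.1 + (Fin.cast hp.symm b.castSucc).1
      rfl
    · exfalso
      rw [Fin.lt_def] at h2
      simp only [Fin.val_mk] at h1
      omega
    · exfalso
      rw [Fin.lt_def] at h2
      simp only [Fin.val_mk] at h1
      omega
    · apply Fin.ext
      show j.1 + b.1 + 1 = j.1 + (Fin.cast hp.symm b.succ).1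
      show j.1 + b.1 + 1 = j.1 + (b.1 + 1)
      omega

lemma key (i j : Fin n) (hij : j.1 < i.1) :
    ∑ k : Fin n, (if j.1 ≤ k.1 then
      (-1 : ℂ) ^ k.1 * minB Ct i k * minOmit Ct j k else 0) = 0 := by
  obtain ⟨N, hN⟩ := minB_expand Ct i
  have h1 : ∑ k : Fin n, (if j.1 ≤ k.1 then
        (-1 : ℂ) ^ k.1 * minB Ct i k * minOmit Ct j k else 0)
      = ∑ c : Fin (n - j.1), (-1 : ℂ) ^ (j.1 + c.1) * minB Ct i (idxFrom j.1 c)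
          * minOmit Ct j (idxFrom j.1 c) := by
    rw [← Finset.sum_filter]
    apply Finset.sum_nbij'
      (fun k : Fin n => (⟨k.1 - j.1, by have := k.2; have := j.2; omega⟩ : Fin (n - j.1)))
      (fun c : Fin (n - j.1) => idxFrom j.1 c)
    · intros; exact Finset.mem_univ _
    · intro c _
      refine Finset.mem_filter.mpr ⟨Finset.mem_univ _, ?_⟩
      show j.1 ≤ j.1 + c.1
      omega
    · intro k hk
      have hjk : j.1 ≤ k.1 := (Finset.mem_filter.mp hk).2
      apply Fin.ext
      show j.1 + (k.1 - j.1) = k.1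
      omega
    · intro c _
      apply Fin.ext
      show (j.1 + c.1) - j.1 = c.1
      omega
    · intro k hk
      have hjk : j.1 ≤ k.1 := (Finset.mem_filter.mp hk).2
      simp only []
      have e : idxFrom (n := n) j.1 ⟨k.1 - j.1, by have := k.2; have := j.2; omega⟩ = k := by
        apply Fin.ext
        show j.1 + (k.1 - j.1) = k.1
        omega
      rw [e]
      have e2 : j.1 + ((⟨k.1 - j.1, by have := k.2; have := j.2; omega⟩ : Fin (n - j.1))).1
          = k.1 := by
        show j.1 + (k.1 - j.1) = k.1
        omega
      rw [e2]
  rw [h1]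
  have h2 : ∀ c : Fin (n - j.1),
      (-1 : ℂ) ^ (j.1 + c.1) * minB Ct i (idxFrom j.1 c) * minOmit Ct j (idxFrom j.1 c)
      = ∑ r : Fin (n - i.1), ((-1 : ℂ) ^ j.1 * (-1 : ℂ) ^ r.1 * N r.1)
          * ((-1 : ℂ) ^ c.1 * Ct (idxFrom i.1 r) (idxFrom j.1 c)
              * minOmit Ct j (idxFrom j.1 c)) := by
    intro c
    rw [hN, Finset.mul_sum, Finset.sum_mul]
    apply Finset.sum_congr rfl
    intro r _
    rw [pow_add]
    ring
  rw [Finset.sum_congr rfl (fun c _ => h2 c), Finset.sum_comm]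
  apply Finset.sum_eq_zero
  intro r _
  rw [← Finset.mul_sum,
    omit_expansion Ct j (idxFrom i.1 r) (by show j.1 < i.1 + r.1; omega), mul_zero]

/-- 0-based indices: with
`f_{i,k} = (-1)^{n-1-i} t⁻¹ Δ^{0,i+1,…}_{i,…}(C₁) Δ^{i,…}_{k,i+1,…}(C_t)
  / (Δ^{i+1,…}_{i+1,…}(C_t) Δ^{i,…}_{i,…}(C_t))` for `k ≤ i` and
`g_{k,i} = (-1)^{n-1-k} t Δ^{i+1,…}_{i,…,k̂,…}(C_t) / Δ^{0,i+1,…}_{i,…}(C₁)` for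
`i ≤ k`, the lower triangular matrices `P = (f_{i,k})` and `Q = (g_{k,i})` satisfy
`P Q = I`, provided `t` and all minors in denominators are nonzero. -/
theorem stmt_11 (n : ℕ) (t : ℂ) (ht : t ≠ 0) (Ct C1 : Matrix (Fin n) (Fin n) ℂ)
    (hden : ∀ i : Fin n, minA C1 i ≠ 0 ∧ minC Ct i ≠ 0 ∧ minD Ct i ≠ 0) :
    (Matrix.of fun i k : Fin n =>
        if k.1 ≤ i.1 then
          (-1 : ℂ) ^ (n - 1 - i.1) * t⁻¹ * (minA C1 i * minB Ct i k)
            / (minC Ct i * minD Ct i)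
        else 0) *
      (Matrix.of fun k i : Fin n =>
        if i.1 ≤ k.1 then
          (-1 : ℂ) ^ (n - 1 - k.1) * t * minOmit Ct i k / minA C1 i
        else 0) = 1 := by
  ext i j
  rw [Matrix.mul_apply, Matrix.one_apply]
  simp only [Matrix.of_apply]
  by_cases hij : i = j
  · subst hij
    rw [if_pos rfl, Finset.sum_eq_single i]
    · rw [if_pos le_rfl, if_pos le_rfl, minB_self, minOmit_self]
      obtain ⟨hA, hC, hD⟩ := hden i
      have hs : ((-1 : ℂ) ^ (n - 1 - i.1)) * ((-1 : ℂ) ^ (n - 1 - i.1)) = 1 := by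
        rw [← pow_add]; exact Even.neg_one_pow ⟨n - 1 - i.1, rfl⟩
      field_simp
      ring_nf
      rw [pow_mul, pow_two, hs]
    · intro k _ hk
      by_cases h1 : k.1 ≤ i.1
      · rw [if_neg (show ¬ i.1 ≤ k.1 from fun h => hk (Fin.ext (by omega))), mul_zero]
      · rw [if_neg h1, zero_mul]
    · intro h
      exact absurd (Finset.mem_univ i) h
  · rw [if_neg hij]
    have hne : i.1 ≠ j.1 := fun h => hij (Fin.ext h)
    rcases Nat.lt_or_ge i.1 j.1 with h | h
    · apply Finset.sum_eq_zero
      intro k _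
      by_cases h1 : k.1 ≤ i.1
      · rw [if_neg (show ¬ j.1 ≤ k.1 by omega), mul_zero]
      · rw [if_neg h1, zero_mul]
    · have hji : j.1 < i.1 := by omega
      have hk := key Ct i j hji
      obtain ⟨hAi, hCi, hDi⟩ := hden i
      obtain ⟨hAj, hCj, hDj⟩ := hden j
      set c : ℂ := (-1 : ℂ) ^ (n - 1 - i.1) * t⁻¹ * minA C1 i / (minC Ct i * minD Ct i)
        * ((-1 : ℂ) ^ (n - 1) * t / minA C1 j) with hc
      have hterm : ∀ k : Fin n,
          (if k.1 ≤ i.1 then (-1 : ℂ) ^ (n - 1 - i.1) * t⁻¹ * (minA C1 i * minB Ct i k)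
              / (minC Ct i * minD Ct i) else 0)
            * (if j.1 ≤ k.1 then (-1 : ℂ) ^ (n - 1 - k.1) * t * minOmit Ct j k / minA C1 j
              else 0)
          = c * (if j.1 ≤ k.1 then (-1 : ℂ) ^ k.1 * minB Ct i k * minOmit Ct j k else 0) := by
        intro k
        by_cases h2 : j.1 ≤ k.1
        · rw [if_pos h2, if_pos h2]
          by_cases h1 : k.1 ≤ i.1
          · rw [if_pos h1]
            have hkn := k.2
            have hs : (-1 : ℂ) ^ (n - 1 - k.1) = (-1 : ℂ) ^ (n - 1) * (-1 : ℂ) ^ k.1 := by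
              have e : (n - 1 - k.1) + k.1 = n - 1 := by omega
              have h2k : (-1 : ℂ) ^ k.1 * (-1 : ℂ) ^ k.1 = 1 := by
                rw [← pow_add]; exact Even.neg_one_pow ⟨k.1, rfl⟩
              calc (-1 : ℂ) ^ (n - 1 - k.1)
                  = (-1 : ℂ) ^ (n - 1 - k.1) * ((-1 : ℂ) ^ k.1 * (-1 : ℂ) ^ k.1) := by
                    rw [h2k, mul_one]
                _ = ((-1 : ℂ) ^ (n - 1 - k.1) * (-1 : ℂ) ^ k.1) * (-1 : ℂ) ^ k.1 := by ring
                _ = (-1 : ℂ) ^ (n - 1) * (-1 : ℂ) ^ k.1 := by rw [← pow_add, e]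
            rw [hs, hc]
            field_simp
          · rw [if_neg h1, zero_mul, minB_eq_zero Ct i k (by omega)]
            ring
        · rw [if_neg h2, if_neg h2, mul_zero, mul_zero]
      rw [Finset.sum_congr rfl (fun k _ => hterm k), ← Finset.mul_sum, hk, mul_zero]
end

section
/- In the Poisson algebra of the previous context (variables b^{(t)}_{i,j}, c^{(t)}_{j,i} with {b^{(t)}_{i,j}, c^{(t)}_{j,i}} = −1 and other brackets zero), define μ_i = (−1)^{n−i} t^{−1} (Δ^{1,i+1,…,n}_{i,i+1,…,n}(C_1)/Δ^{i+1,…,n}_{i+1,…,n}(C_t)) ∑_{k=1}^{i} (Δ^{i,i+1,…,n}_{k,i+1,…,n}(C_t)/Δ^{i,…,n}_{i,…,n}(C_t)) b^{(t)}_{k,1} and λ_i = (−1)^{n−i+1} t · Δ^{1,i+1,…,n}_{i,i+1,…,n}(C_t)/Δ^{1,i+1,…,n}_{i,i+1,…,n}(C_1). Then {λ_i, λ_j} = 0 and {μ_i, μ_j} = 0 for all i, j. -/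
open Matrix Finset

/-- `μ_i = (-1)^{n-1-i} t⁻¹ (Δ^{0,i+1,…}_{i,…}(C₁)/Δ^{i+1,…}_{i+1,…}(C_t))
  ∑_{k≤i} (Δ^{i,…}_{k,i+1,…}(C_t)/Δ^{i,…}_{i,…}(C_t)) b_k`  (0-based). -/
def muVar {A : Type*} [Field A] {n : ℕ} (t : A) (b : Fin n → A)
    (Ct C1 : Matrix (Fin n) (Fin n) A) (i : Fin n) : A :=
  (-1 : A) ^ (n - 1 - i.1) * t⁻¹ * (minA C1 i / minC Ct i) *
    ∑ k : Fin n, if k.1 ≤ i.1 then (minB Ct i k / minD Ct i) * b k else 0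

/-- `λ_i = (-1)^{n-i} t · Δ^{0,i+1,…}_{i,…}(C_t)/Δ^{0,i+1,…}_{i,…}(C₁)` (0-based). -/
def lamVar {A : Type*} [Field A] {n : ℕ} (t : A)
    (Ct C1 : Matrix (Fin n) (Fin n) A) (i : Fin n) : A :=
  (-1 : A) ^ (n - i.1) * t * (minA Ct i / minA C1 i)


section Aux

variable {A : Type*} [Field A] {P : A → A → A}

lemma pzero (haddl : ∀ x y z : A, P (x + y) z = P x z + P y z) (z : A) :
    P 0 z = 0 := by
  have h := haddl 0 0 z
  rw [zero_add] at h
  exact (left_eq_add.mp h)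

lemma pone (hleib : ∀ x y z : A, P (x * y) z = x * P y z + y * P x z) (z : A) :
    P 1 z = 0 := by
  have h := hleib 1 1 z
  simp only [one_mul] at h
  exact (left_eq_add.mp h)

lemma pstep (haddl : ∀ x y z : A, P (x + y) z = P x z + P y z)
    (hleib : ∀ x y z : A, P (x * y) z = x * P y z + y * P x z)
    (S : Set A) (z : A) (hz : ∀ g ∈ S, P g z = 0) :
    ∀ x ∈ Subfield.closure S, P x z = 0 := by
  intro x hx
  induction hx using Subfield.closure_induction with
  | mem g hg => exact hz g hg
  | one => exact pone hleib z
  | add x y _ _ hx hy => rw [haddl, hx, hy, add_zero]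
  | neg x _ hx =>
    have h := haddl x (-x) z
    rw [add_neg_cancel, pzero haddl, hx, zero_add] at h
    exact h.symm
  | inv x _ hx =>
    by_cases h : x = 0
    · rw [h, _root_.inv_zero]; exact pzero haddl z
    · have h2 := hleib x x⁻¹ z
      rw [mul_inv_cancel₀ h, pone hleib, hx, mul_zero, add_zero] at h2
      rcases mul_eq_zero.mp h2.symm with h3 | h3
      · exact absurd h3 h
      · exact h3
  | mul x y _ _ hx hy => rw [hleib, hx, hy, mul_zero, mul_zero, add_zero]

lemma key_s13 (haddl : ∀ x y z : A, P (x + y) z = P x z + P y z)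
    (hleib : ∀ x y z : A, P (x * y) z = x * P y z + y * P x z)
    (hskew : ∀ x y : A, P x y = -P y x)
    (S : Set A) (hS : ∀ x ∈ S, ∀ y ∈ S, P x y = 0) :
    ∀ x ∈ Subfield.closure S, ∀ y ∈ Subfield.closure S, P x y = 0 := by
  have h1 : ∀ g ∈ S, ∀ x ∈ Subfield.closure S, P x g = 0 := by
    intro g hg
    exact pstep haddl hleib S g (fun g' hg' => hS g' hg' g hg)
  intro x hx y hy
  refine pstep haddl hleib S y ?_ x hx
  intro g hg
  rw [hskew]
  rw [h1 g hg y hy, neg_zero]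

lemma det_mem (K : Subfield A) {r : ℕ} (M : Matrix (Fin r) (Fin r) A)
    (h : ∀ i j, M i j ∈ K) : M.det ∈ K := by
  rw [Matrix.det_apply']
  exact K.sum_mem fun σ _ => K.mul_mem (by exact_mod_cast intCast_mem K ((Equiv.Perm.sign σ : ℤ)))
    (K.prod_mem fun i _ => h _ _)

lemma minorDet_mem (K : Subfield A) {n r : ℕ} (C : Matrix (Fin n) (Fin n) A)
    (rows cols : Fin r → Fin n) (h : ∀ a b, C (rows a) (cols b) ∈ K) :
    minorDet C rows cols ∈ K :=
  det_mem K _ fun a b => h a b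

end Aux

/-- in the Poisson algebra generated by `b^{(t)}_{k,1}` and the
entries of `C_t`, `C_1`, with `{b^{(t)}_{k,1}, c^{(t)}_{1,k}} = -1` the only
nonvanishing brackets among generators and `t` central, the variables `λ_i`, `μ_i`
satisfy `{λ_i, λ_j} = 0` and `{μ_i, μ_j} = 0` for all `i, j`. -/
theorem stmt_13 (n : ℕ) (A : Type*) [Field A] (P : A → A → A)
    (haddl : ∀ x y z : A, P (x + y) z = P x z + P y z)
    (hleib : ∀ x y z : A, P (x * y) z = x * P y z + y * P x z)
    (hskew : ∀ x y : A, P x y = -P y x)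
    (t : A) (ht : ∀ x, P t x = 0)
    (b : Fin n → A) (Ct C1 : Matrix (Fin n) (Fin n) A)
    (hbct : ∀ k l m : Fin n, P (b k) (Ct l m) = if l.1 = 0 ∧ m = k then -1 else 0)
    (hbc1 : ∀ k l m : Fin n, P (b k) (C1 l m) = 0)
    (hbb : ∀ k k' : Fin n, P (b k) (b k') = 0)
    (hctct : ∀ l m l' m' : Fin n, P (Ct l m) (Ct l' m') = 0)
    (hctc1 : ∀ l m l' m' : Fin n, P (Ct l m) (C1 l' m') = 0)
    (hc1c1 : ∀ l m l' m' : Fin n, P (C1 l m) (C1 l' m') = 0) :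
    (∀ i j : Fin n, P (lamVar t Ct C1 i) (lamVar t Ct C1 j) = 0) ∧
    (∀ i j : Fin n, P (muVar t b Ct C1 i) (muVar t b Ct C1 j) = 0) := by
  -- the two commuting generating sets
  set S1 : Set A :=
    {x | x = t ∨ (∃ l m, x = Ct l m) ∨ (∃ l m, x = C1 l m)} with hS1def
  set S0 : Set A :=
    {x | x = t ∨ (∃ k, x = b k) ∨ (∃ l m, x = C1 l m) ∨
      (∃ l m, (l : Fin n).val ≠ 0 ∧ x = Ct l m)} with hS0def
  have hS1 : ∀ x ∈ S1, ∀ y ∈ S1, P x y = 0 := by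
    rintro x (rfl | ⟨l, m, rfl⟩ | ⟨l, m, rfl⟩) y (rfl | ⟨l', m', rfl⟩ | ⟨l', m', rfl⟩)
    · exact ht _
    · exact ht _
    · exact ht _
    · rw [hskew, ht, neg_zero]
    · exact hctct l m l' m'
    · exact hctc1 l m l' m'
    · rw [hskew, ht, neg_zero]
    · rw [hskew, hctc1, neg_zero]
    · exact hc1c1 l m l' m'
  have hS0 : ∀ x ∈ S0, ∀ y ∈ S0, P x y = 0 := by
    rintro x (rfl | ⟨k, rfl⟩ | ⟨l, m, rfl⟩ | ⟨l, m, hl, rfl⟩)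
      y (rfl | ⟨k', rfl⟩ | ⟨l', m', rfl⟩ | ⟨l', m', hl', rfl⟩)
    · exact ht _
    · exact ht _
    · exact ht _
    · exact ht _
    · rw [hskew, ht, neg_zero]
    · exact hbb k k'
    · exact hbc1 k l' m'
    · rw [hbct, if_neg]; rintro ⟨h0, -⟩; exact hl' h0
    · rw [hskew, ht, neg_zero]
    · rw [hskew, hbc1, neg_zero]
    · exact hc1c1 l m l' m'
    · rw [hskew, hctc1, neg_zero]
    · rw [hskew, ht, neg_zero]
    · rw [hskew, hbct, if_neg, neg_zero]; rintro ⟨h0, -⟩; exact hl h0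
    · exact hctc1 l m l' m'
    · exact hctct l m l' m'
  constructor
  · -- λ part
    have hmem : ∀ i : Fin n, lamVar t Ct C1 i ∈ Subfield.closure S1 := by
      intro i
      have htm : t ∈ Subfield.closure S1 := Subfield.subset_closure (Or.inl rfl)
      have hct : ∀ l m : Fin n, Ct l m ∈ Subfield.closure S1 :=
        fun l m => Subfield.subset_closure (Or.inr (Or.inl ⟨l, m, rfl⟩))
      have hc1 : ∀ l m : Fin n, C1 l m ∈ Subfield.closure S1 :=
        fun l m => Subfield.subset_closure (Or.inr (Or.inr ⟨l, m, rfl⟩))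
      unfold lamVar minA
      exact mul_mem (mul_mem (pow_mem (neg_mem (one_mem _)) _) htm)
        (div_mem (minorDet_mem _ _ _ _ (fun a c => hct _ _))
          (minorDet_mem _ _ _ _ (fun a c => hc1 _ _)))
    intro i j
    exact key_s13 haddl hleib hskew S1 hS1 _ (hmem i) _ (hmem j)
  · -- μ part
    have htm : t ∈ Subfield.closure S0 := Subfield.subset_closure (Or.inl rfl)
    have hbm : ∀ k : Fin n, b k ∈ Subfield.closure S0 :=
      fun k => Subfield.subset_closure (Or.inr (Or.inl ⟨k, rfl⟩))
    have hc1 : ∀ l m : Fin n, C1 l m ∈ Subfield.closure S0 :=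
      fun l m => Subfield.subset_closure (Or.inr (Or.inr (Or.inl ⟨l, m, rfl⟩)))
    have hct : ∀ l m : Fin n, (l : Fin n).val ≠ 0 → Ct l m ∈ Subfield.closure S0 :=
      fun l m hl => Subfield.subset_closure (Or.inr (Or.inr (Or.inr ⟨l, m, hl, rfl⟩)))
    have hmem : ∀ i : Fin n, muVar t b Ct C1 i ∈ Subfield.closure S0 := by
      intro i
      unfold muVar
      refine mul_mem (mul_mem (mul_mem (pow_mem (neg_mem (one_mem _)) _) (inv_mem htm)) ?_) ?_
      · -- minA C1 i / minC Ct i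
        refine div_mem (minorDet_mem _ _ _ _ (fun a c => hc1 _ _))
          (minorDet_mem _ _ _ _ (fun a c => hct _ _ ?_))
        show (idxFrom (i.1 + 1) a : Fin n).val ≠ 0
        simp [idxFrom]
      · refine Subfield.sum_mem _ (fun k _ => ?_)
        by_cases hk : k.1 ≤ i.1
        · rw [if_pos hk]
          refine mul_mem ?_ (hbm k)
          by_cases hi : i.1 = 0
          · -- then k = 0 and minB = minD
            have hk0 : k.1 = 0 := by omega
            have hfun : idxRepl (n := n) i.1 k = idxFrom i.1 := by
              funext l
              unfold idxRepl idxFrom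
              split
              · next h0 => exact Fin.ext (by simp [hk0, hi, h0])
              · rfl
            have heq : minB Ct i k = minD Ct i := by
              unfold minB minD minorDet
              rw [hfun]
            rw [heq]
            rcases eq_or_ne (minD Ct i) 0 with h0 | h0
            · rw [h0, div_zero]; exact zero_mem _
            · rw [div_self h0]; exact one_mem _
          · -- rows all have index ≥ i ≥ 1
            refine div_mem (minorDet_mem _ _ _ _ (fun a c => hct _ _ ?_))
              (minorDet_mem _ _ _ _ (fun a c => hct _ _ ?_)) <;>
            · show (idxFrom i.1 a : Fin n).val ≠ 0
              simp [idxFrom]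
              omega
        · rw [if_neg hk]; exact zero_mem _
    intro i j
    exact key_s13 haddl hleib hskew S0 hS0 _ (hmem i) _ (hmem j)
end
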